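/- Let ℓ, u ∈ ℝ^n with ℓ ≤ u, let f_j(t) = min{max{t, ℓ_j}, u_j} for each j, let W ∈ ℝ^{n×n} be nonnegative and stochastic, let ε ∈ ℝ^n, and let g : ℝ^n → ℝ be strictly increasing. Then any solution x* of the programming problem: maximize g(x) over x ∈ [ℓ, u] subject to 0 ≤ max{xW + ε − x, ℓ − x} componentwise, is an equilibrium, i.e. satisfies x*_j = min{max{Σ_{i=1}^n x*_i w_{ij} + ε_j, ℓ_j}, u_j} for all j. -/
import Mathlib


/-- For bounded identity interaction functions `f j t = min (max t (ℓ j)) (u j)`,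
`W` nonnegative and (row or column) stochastic, and a strictly increasing objective
`g`, any solution `x*` of: maximize `g x` over `x ∈ [ℓ, u]` subject to
`0 ≤ max (x W + ε − x) (ℓ − x)` componentwise, is an equilibrium. -/
theorem stmt19 {n : ℕ} (l u : Fin n → ℝ) (hlu : l ≤ u)
    (W : Matrix (Fin n) (Fin n) ℝ) (ε : Fin n → ℝ)
    (hpos : ∀ i j, 0 ≤ W i j)
    (hstoch : (∀ i, ∑ j, W i j = 1) ∨ (∀ j, ∑ i, W i j = 1))
    (g : (Fin n → ℝ) → ℝ) (hg : StrictMono g)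
    (xstar : Fin n → ℝ)
    (hmeml : l ≤ xstar) (hmemu : xstar ≤ u)
    (hfeas : ∀ j, 0 ≤ max (∑ i, xstar i * W i j + ε j - xstar j) (l j - xstar j))
    (hopt : ∀ x : Fin n → ℝ, l ≤ x → x ≤ u →
      (∀ j, 0 ≤ max (∑ i, x i * W i j + ε j - x j) (l j - x j)) → g x ≤ g xstar) :
    ∀ j, xstar j = min (max (∑ i, xstar i * W i j + ε j) (l j)) (u j) := by
  set y : Fin n → ℝ := fun j => min (max (∑ i, xstar i * W i j + ε j) (l j)) (u j) with hy
  have hxy : xstar ≤ y := by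
    intro j
    have h := hfeas j
    rw [max_sub_sub_right, sub_nonneg] at h
    exact le_min h (hmemu j)
  have hly : l ≤ y := fun j => le_trans (hmeml j) (hxy j)
  have hyu : y ≤ u := fun j => min_le_right _ _
  have hyfeas : ∀ j, 0 ≤ max (∑ i, y i * W i j + ε j - y j) (l j - y j) := by
    intro j
    rw [max_sub_sub_right, sub_nonneg]
    have hsum : ∑ i, xstar i * W i j ≤ ∑ i, y i * W i j :=
      Finset.sum_le_sum fun i _ => mul_le_mul_of_nonneg_right (hxy i) (hpos i j)
    calc y j ≤ max (∑ i, xstar i * W i j + ε j) (l j) := min_le_left _ _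
      _ ≤ max (∑ i, y i * W i j + ε j) (l j) :=
        max_le_max (by linarith) le_rfl
  have hgy : g y ≤ g xstar := hopt y hly hyu hyfeas
  have hxe : xstar = y := by
    by_contra hne
    exact absurd (hg (lt_of_le_of_ne hxy hne)) (not_lt.2 hgy)
  intro j
  exact congrFun hxe j
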